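/- Let x be a solution of the EigenAnt dynamics with positive initial conditions, and assume at least one index j has d_j < d_1. Define σ_1 := (1/(β d_1)) Σ_{j : d_j = d_1} x_j(0), d′_2 := max{ d_j : d_j < d_1 }, and σ_2 := (1/(β d′_2)) Σ_{j : d_j = d′_2} x_j(0). Then the total S(t) := Σ_{j=1}^n x_j(t) converges to β d_1/α with speed proportional to the gap between d_1 and d′_2: ( S(t) − β d_1/α ) · e^{α(1 − d′_2/d_1) t} → − β σ_2 (d_1 − d′_2) (α σ_1)^{−d′_2/d_1} as t → +∞. -/

import Mathlib

open Filter MeasureTheory Set Real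

theorem stmt18
    (n : ℕ) (hn : 0 < n) (α β : ℝ) (hα : 0 < α) (hβ : 0 < β)
    (d : Fin n → ℝ) (hd : ∀ i j : Fin n, i ≤ j → d j ≤ d i) (hdpos : ∀ i, 0 < d i)
    (x : ℝ → Fin n → ℝ)
    (hS : ∀ t : ℝ, 0 ≤ t → (∑ j, x t j) ≠ 0)
    (hode : ∀ (i : Fin n) (t : ℝ), 0 ≤ t →
      HasDerivAt (fun s => x s i) ((-α + β * d i / (∑ j, x t j)) * x t i) t)
    (hx0 : ∀ i, 0 < x 0 i)
    (hsub : ∃ j, d j < d ⟨0, hn⟩)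
    (σ1 σ2 d2 : ℝ)
    (hσ1 : σ1 = (1 / (β * d ⟨0, hn⟩)) * ∑ j ∈ Finset.univ.filter (fun j => d j = d ⟨0, hn⟩), x 0 j)
    (hd2mem : ∃ j, d j = d2) (hd2lt : d2 < d ⟨0, hn⟩)
    (hd2max : ∀ j, d j < d ⟨0, hn⟩ → d j ≤ d2)
    (hσ2 : σ2 = (1 / (β * d2)) * ∑ j ∈ Finset.univ.filter (fun j => d j = d2), x 0 j) :
    Tendsto (fun t => ((∑ j, x t j) - β * d ⟨0, hn⟩ / α) * Real.exp (α * (1 - d2 / d ⟨0, hn⟩) * t))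
      atTop (nhds (-(β * σ2 * (d ⟨0, hn⟩ - d2) * (α * σ1) ^ (-(d2 / d ⟨0, hn⟩))))) := by
  classical
  set i0 : Fin n := ⟨0, hn⟩ with hi0def
  have hD : ∀ j : Fin n, d j ≤ d i0 := fun j => hd i0 j (by simp [hi0def, Fin.le_def])
  have hDpos : 0 < d i0 := hdpos i0
  have hd2pos : 0 < d2 := by obtain ⟨j2, hj2⟩ := hd2mem; rw [← hj2]; exact hdpos j2
  -- continuity and positivity of the total S
  have hScont : ∀ t : ℝ, 0 ≤ t → ContinuousAt (fun s => ∑ j, x s j) t := by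
    intro t ht
    exact tendsto_finset_sum _ fun i _ => (hode i t ht).continuousAt
  have hne : Nonempty (Fin n) := ⟨i0⟩
  have hS0pos : 0 < ∑ j, x 0 j := Finset.sum_pos (fun i _ => hx0 i) Finset.univ_nonempty
  have hSpos : ∀ t : ℝ, 0 ≤ t → 0 < ∑ j, x t j := by
    intro t ht
    by_contra h
    push_neg at h
    have hlt : (∑ j, x t j) < 0 := lt_of_le_of_ne h (hS t ht)
    have hcont : ContinuousOn (fun s => ∑ j, x s j) (Icc 0 t) :=
      fun s hs => (hScont s hs.1).continuousWithinAt
    obtain ⟨c, hc, hc0⟩ := intermediate_value_Icc' ht hcont ⟨hlt.le, hS0pos.le⟩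
    exact hS c hc.1 hc0
  -- the extended total
  set Sb : ℝ → ℝ := fun s => ∑ j, x (max s 0) j with hSbdef
  have hSbcont : Continuous Sb := by
    have h1 : ContinuousOn (fun s => ∑ j, x s j) (Ici 0) :=
      fun s hs => (hScont s hs).continuousWithinAt
    exact h1.comp_continuous (continuous_id.max continuous_const) fun s => le_max_right s 0
  have hSbpos : ∀ s, 0 < Sb s := fun s => hSpos _ (le_max_right s 0)
  have hSbeq : ∀ t : ℝ, 0 ≤ t → Sb t = ∑ j, x t j := by
    intro t ht; simp only [hSbdef, max_eq_left ht]
  -- the time change u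
  set u : ℝ → ℝ := fun t => ∫ s in (0:ℝ)..t, (Sb s)⁻¹ with hudef
  have hSbinv : Continuous fun s => (Sb s)⁻¹ := hSbcont.inv₀ fun s => (hSbpos s).ne'
  have hu : ∀ t, HasDerivAt u (Sb t)⁻¹ t :=
    fun t => (hSbinv.integral_hasStrictDerivAt 0 t).hasDerivAt
  have hucont : Continuous u := Differentiable.continuous (fun t => (hu t).differentiableAt)
  have hu0 : u 0 = 0 := intervalIntegral.integral_same
  -- explicit solution formula
  have hxform : ∀ (i : Fin n) (t : ℝ), 0 ≤ t →
      x t i = x 0 i * Real.exp (β * d i * u t - α * t) := by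
    intro i T hT
    have key : ∀ t ∈ Icc (0:ℝ) T,
        x t i * Real.exp (α * t - β * d i * u t)
          = x 0 i * Real.exp (α * 0 - β * d i * u 0) := by
      apply constant_of_has_deriv_right_zero
      · intro s hs
        have hdx := (hode i s hs.1).continuousAt
        have hgu : ContinuousAt (fun t => Real.exp (α * t - β * d i * u t)) s :=
          (Real.continuous_exp.comp
            ((continuous_const.mul continuous_id).sub (continuous_const.mul hucont))).continuousAt
        exact (hdx.mul hgu).continuousWithinAt
      · intro s hs
        have hs0 : 0 ≤ s := hs.1
        have hx' := hode i s hs0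
        have hlin : HasDerivAt (fun t => α * t - β * d i * u t)
            (α * 1 - β * d i * (Sb s)⁻¹) s :=
          ((hasDerivAt_id s).const_mul α).sub ((hu s).const_mul (β * d i))
        have hexp := hlin.exp
        have hmul := hx'.mul hexp
        have h0 : (-α + β * d i / (∑ j, x s j)) * x s i *
              Real.exp (α * s - β * d i * u s)
            + x s i * (Real.exp (α * s - β * d i * u s) * (α * 1 - β * d i * (Sb s)⁻¹)) = 0 := by
          rw [hSbeq s hs0]
          have hne0 : (∑ j, x s j) ≠ 0 := (hSpos s hs0).ne'
          field_simp
          ring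
        rw [h0] at hmul
        exact hmul.hasDerivWithinAt
    have hTT := key T ⟨hT, le_refl T⟩
    rw [hu0] at hTT
    norm_num at hTT
    calc x T i = x T i * (Real.exp (α * T - β * d i * u T) * Real.exp (β * d i * u T - α * T)) := by
          rw [← Real.exp_add]; norm_num
      _ = x 0 i * Real.exp (β * d i * u T - α * T) := by rw [← mul_assoc, hTT]
  have hSform : ∀ t : ℝ, 0 ≤ t →
      (∑ j, x t j) = ∑ j, x 0 j * Real.exp (β * d j * u t - α * t) :=
    fun t ht => Finset.sum_congr rfl fun j _ => hxform j t ht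
  -- the function E
  set Atot : ℝ := ∑ j, α * x 0 j / (β * d j) with hAdef
  have hApos : 0 < Atot := by
    rw [hAdef]
    exact Finset.sum_pos (fun j _ => div_pos (mul_pos hα (hx0 j)) (mul_pos hβ (hdpos j)))
      Finset.univ_nonempty
  set E : ℝ → ℝ := fun y =>
    (1 - Atot) + ∑ j, (α * x 0 j / (β * d j)) * Real.exp (β * d j * y) with hEdef
  have hE0 : E 0 = 1 := by
    simp only [hEdef, mul_zero, Real.exp_zero, mul_one, hAdef]
    ring
  -- key sum identity
  have hsumS : ∀ s : ℝ, 0 ≤ s →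
      (∑ j, x 0 j * Real.exp (β * d j * u s)) = Real.exp (α * s) * Sb s := by
    intro s hs0
    rw [hSbeq s hs0, hSform s hs0, Finset.mul_sum]
    apply Finset.sum_congr rfl
    intro j _
    rw [Real.exp_sub]
    field_simp
  have hEeq : ∀ t : ℝ, 0 ≤ t → Real.exp (α * t) = E (u t) := by
    intro T hT
    have key : ∀ t ∈ Icc (0:ℝ) T,
        Real.exp (α * t) - E (u t) = Real.exp (α * 0) - E (u 0) := by
      apply constant_of_has_deriv_right_zero
      · apply Continuous.continuousOn
        apply Continuous.sub
        · exact Real.continuous_exp.comp (continuous_const.mul continuous_id)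
        · simp only [hEdef]
          apply continuous_const.add
          apply continuous_finset_sum
          intro j _
          exact continuous_const.mul
            (Real.continuous_exp.comp (continuous_const.mul hucont))
      · intro s hs
        have hs0 : 0 ≤ s := hs.1
        have h1 : HasDerivAt (fun t => Real.exp (α * t)) (Real.exp (α * s) * (α * 1)) s :=
          ((hasDerivAt_id s).const_mul α).exp
        have h2 : HasDerivAt (fun t => E (u t))
            (∑ j, (α * x 0 j / (β * d j)) *
              (Real.exp (β * d j * u s) * (β * d j * (Sb s)⁻¹))) s := by
          simp only [hEdef]
          apply HasDerivAt.const_add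
          exact HasDerivAt.fun_sum fun j _ =>
            (((hu s).const_mul (β * d j)).exp).const_mul (α * x 0 j / (β * d j))
        have hsum0 : (∑ j, (α * x 0 j / (β * d j)) *
              (Real.exp (β * d j * u s) * (β * d j * (Sb s)⁻¹)))
            = Real.exp (α * s) * (α * 1) := by
          have hper : ∀ j : Fin n, (α * x 0 j / (β * d j)) *
                (Real.exp (β * d j * u s) * (β * d j * (Sb s)⁻¹))
              = (Sb s)⁻¹ * (α * (x 0 j * Real.exp (β * d j * u s))) := by
            intro j
            have hb0 : β ≠ 0 := hβ.ne'
            have hd0 : d j ≠ 0 := (hdpos j).ne'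
            have hSb0 : Sb s ≠ 0 := (hSbpos s).ne'
            field_simp
          rw [Finset.sum_congr rfl fun j _ => hper j, ← Finset.mul_sum, ← Finset.mul_sum,
            hsumS s hs0]
          have hSb0 : Sb s ≠ 0 := (hSbpos s).ne'
          field_simp
        have := h1.sub h2
        rw [hsum0, sub_self] at this
        exact this.hasDerivWithinAt
    have hTT := key T ⟨hT, le_refl T⟩
    rw [hu0, hE0] at hTT
    norm_num at hTT
    linarith [hTT]
  -- u is nonnegative and tends to infinity
  have hunn : ∀ t : ℝ, 0 ≤ t → 0 ≤ u t := by
    intro t ht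
    simp only [hudef]
    apply intervalIntegral.integral_nonneg ht
    intro s _
    exact (inv_pos.mpr (hSbpos s)).le
  have hbound : ∀ t : ℝ, 0 ≤ t →
      (Real.exp (α * t) + (Atot - 1)) / Atot ≤ Real.exp (β * d i0 * u t) := by
    intro t ht
    rw [div_le_iff₀ hApos]
    have hEt := hEeq t ht
    have hle : ∑ j, (α * x 0 j / (β * d j)) * Real.exp (β * d j * u t)
        ≤ Atot * Real.exp (β * d i0 * u t) := by
      rw [hAdef, Finset.sum_mul]
      apply Finset.sum_le_sum
      intro j _
      apply mul_le_mul_of_nonneg_left _ (div_pos (mul_pos hα (hx0 j)) (mul_pos hβ (hdpos j))).le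
      apply Real.exp_le_exp.mpr
      apply mul_le_mul_of_nonneg_right _ (hunn t ht)
      exact mul_le_mul_of_nonneg_left (hD j) hβ.le
    have : Real.exp (α * t) = (1 - Atot) + ∑ j, (α * x 0 j / (β * d j)) * Real.exp (β * d j * u t) := hEt
    linarith
  have hutop : Tendsto u atTop atTop := by
    apply tendsto_atTop_mono' atTop
      (f₁ := fun t => Real.log ((Real.exp (α * t) + (Atot - 1)) / Atot) / (β * d i0))
    · filter_upwards [eventually_ge_atTop (0:ℝ)] with t ht
      have hargpos : 0 < (Real.exp (α * t) + (Atot - 1)) / Atot := by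
        apply div_pos _ hApos
        have : (1:ℝ) ≤ Real.exp (α * t) := Real.one_le_exp (mul_nonneg hα.le ht)
        linarith
      rw [div_le_iff₀ (mul_pos hβ hDpos)]
      rw [Real.log_le_iff_le_exp hargpos]
      calc (Real.exp (α * t) + (Atot - 1)) / Atot ≤ Real.exp (β * d i0 * u t) := hbound t ht
        _ = Real.exp (u t * (β * d i0)) := by ring_nf
    · apply Tendsto.atTop_div_const (mul_pos hβ hDpos)
      apply Real.tendsto_log_atTop.comp
      apply Tendsto.atTop_div_const hApos
      apply tendsto_atTop_add_const_right
      exact Real.tendsto_exp_atTop.comp (Tendsto.const_mul_atTop hα tendsto_id)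
  -- sums over the top and second groups
  have hb0 : β ≠ 0 := hβ.ne'
  have hsum1 : (∑ j ∈ Finset.univ.filter (fun j => d j = d i0), x 0 j) = β * d i0 * σ1 := by
    rw [hσ1]; field_simp
  have hsum2 : (∑ j ∈ Finset.univ.filter (fun j => d j = d2), x 0 j) = β * d2 * σ2 := by
    rw [hσ2]; field_simp
  have hσ1pos : 0 < σ1 := by
    have hfs : 0 < ∑ j ∈ Finset.univ.filter (fun j => d j = d i0), x 0 j := by
      apply Finset.sum_pos (fun j _ => hx0 j)
      exact ⟨i0, Finset.mem_filter.mpr ⟨Finset.mem_univ i0, rfl⟩⟩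
    rw [hσ1]
    exact mul_pos (by positivity) hfs
  have hασ1pos : 0 < α * σ1 := mul_pos hα hσ1pos
  -- the explicit functions of y
  set Nf : ℝ → ℝ := fun y =>
    (∑ j, x 0 j * Real.exp (β * d j * y)) - (β * d i0 / α) * E y with hNfdef
  set Φ : ℝ → ℝ := fun y => Nf y * (E y) ^ (-(d2 / d i0)) with hΦdef
  -- the target equals Φ ∘ u on [0, ∞)
  have htargeq : ∀ t : ℝ, 0 ≤ t →
      ((∑ j, x t j) - β * d i0 / α) * Real.exp (α * (1 - d2 / d i0) * t) = Φ (u t) := by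
    intro t ht
    have hEt : E (u t) = Real.exp (α * t) := (hEeq t ht).symm
    have hexp1 : Real.exp (α * (1 - d2 / d i0) * t)
        = Real.exp (α * t) * (Real.exp (α * t)) ^ (-(d2 / d i0)) := by
      rw [Real.rpow_def_of_pos (Real.exp_pos _), Real.log_exp, ← Real.exp_add]
      ring_nf
    have hsum : (∑ j, x t j) * Real.exp (α * t) = ∑ j, x 0 j * Real.exp (β * d j * u t) := by
      rw [hsumS t ht, hSbeq t ht]
      ring
    simp only [hΦdef, hNfdef, hEt]
    rw [hexp1, ← hsum]
    ring
  -- decaying exponential helper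
  have hexp0 : ∀ c : ℝ, c < 0 → Tendsto (fun y : ℝ => Real.exp (c * y)) atTop (nhds 0) := by
    intro c hc
    exact Real.tendsto_exp_atBot.comp (Tendsto.const_mul_atTop_of_neg hc tendsto_id)
  -- second factor limit
  have hT2 : Tendsto (fun y => E y * Real.exp (-(β * d i0 * y))) atTop (nhds (α * σ1)) := by
    have heq : ∀ y : ℝ, E y * Real.exp (-(β * d i0 * y))
        = (1 - Atot) * Real.exp (-(β * d i0) * y)
          + ∑ j, (α * x 0 j / (β * d j)) * Real.exp ((β * d j - β * d i0) * y) := by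
      intro y
      simp only [hEdef]
      rw [add_mul, Finset.sum_mul]
      congr 1
      · rw [neg_mul]
      · apply Finset.sum_congr rfl
        intro j _
        rw [mul_assoc, ← Real.exp_add]
        congr 2
        ring
    have hlim : Tendsto (fun y => (1 - Atot) * Real.exp (-(β * d i0) * y)
          + ∑ j, (α * x 0 j / (β * d j)) * Real.exp ((β * d j - β * d i0) * y)) atTop
        (nhds ((1 - Atot) * 0 + ∑ j, if d j = d i0 then α * x 0 j / (β * d j) else 0)) := by
      apply Tendsto.add
      · exact (hexp0 _ (by nlinarith [mul_pos hβ hDpos])).const_mul _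
      · apply tendsto_finset_sum
        intro j _
        by_cases hj : d j = d i0
        · simp only [hj, if_pos, sub_self, zero_mul, Real.exp_zero, mul_one]
          exact tendsto_const_nhds
        · rw [if_neg hj]
          have hlt : β * d j - β * d i0 < 0 := by
            have := lt_of_le_of_ne (hD j) hj
            nlinarith
          have := (hexp0 _ hlt).const_mul (α * x 0 j / (β * d j))
          simpa using this
    have hval : ((1 - Atot) * 0 + ∑ j, if d j = d i0 then α * x 0 j / (β * d j) else 0)
        = α * σ1 := by
      rw [mul_zero, zero_add, ← Finset.sum_filter]
      have : ∀ j ∈ Finset.univ.filter (fun j => d j = d i0),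
          α * x 0 j / (β * d j) = (α / (β * d i0)) * x 0 j := by
        intro j hj
        rw [(Finset.mem_filter.mp hj).2]
        ring
      rw [Finset.sum_congr rfl this, ← Finset.mul_sum, hsum1]
      field_simp
    rw [← hval]
    exact Tendsto.congr (fun y => (heq y).symm) hlim
  -- first factor limit
  have hT1 : Tendsto (fun y => Nf y * Real.exp (-(β * d2 * y))) atTop
      (nhds (β * (d2 - d i0) * σ2)) := by
    have heq : ∀ y : ℝ, Nf y * Real.exp (-(β * d2 * y))
        = (∑ j, (x 0 j * (d j - d i0) / d j) * Real.exp ((β * d j - β * d2) * y))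
          - (β * d i0 / α) * (1 - Atot) * Real.exp (-(β * d2) * y) := by
      intro y
      have step1 : Nf y = (∑ j, (x 0 j * (d j - d i0) / d j) * Real.exp (β * d j * y))
          - β * d i0 / α * (1 - Atot) := by
        simp only [hNfdef, hEdef]
        rw [mul_add, Finset.mul_sum, sub_add_eq_sub_sub, sub_right_comm,
          ← Finset.sum_sub_distrib]
        congr 1
        apply Finset.sum_congr rfl
        intro j _
        have ha0 : α ≠ 0 := hα.ne'
        have hd0 : d j ≠ 0 := (hdpos j).ne'
        field_simp
      rw [step1, sub_mul]
      congr 1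
      · rw [Finset.sum_mul]
        apply Finset.sum_congr rfl
        intro j _
        rw [mul_assoc, ← Real.exp_add]
        congr 2
        ring
      · rw [neg_mul, mul_assoc]
    have hlim : Tendsto (fun y =>
          (∑ j, (x 0 j * (d j - d i0) / d j) * Real.exp ((β * d j - β * d2) * y))
            - (β * d i0 / α) * (1 - Atot) * Real.exp (-(β * d2) * y)) atTop
        (nhds ((∑ j, if d j = d2 then x 0 j * (d2 - d i0) / d2 else 0)
          - (β * d i0 / α) * (1 - Atot) * 0)) := by
      apply Tendsto.sub
      · apply tendsto_finset_sum
        intro j _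
        by_cases hj : d j = d2
        · rw [if_pos hj]
          have : (fun y : ℝ => (x 0 j * (d j - d i0) / d j) * Real.exp ((β * d j - β * d2) * y))
              = fun _ => x 0 j * (d2 - d i0) / d2 := by
            funext y
            rw [hj, sub_self, zero_mul, Real.exp_zero, mul_one]
          rw [this]
          exact tendsto_const_nhds
        · rw [if_neg hj]
          by_cases hj2 : d j = d i0
          · have : (fun y : ℝ => (x 0 j * (d j - d i0) / d j) * Real.exp ((β * d j - β * d2) * y))
                = fun _ => 0 := by
              funext y
              rw [hj2, sub_self, mul_zero, zero_div, zero_mul]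
            rw [this]
            exact tendsto_const_nhds
          · have hjlt : d j < d i0 := lt_of_le_of_ne (hD j) hj2
            have hjle : d j < d2 := lt_of_le_of_ne (hd2max j hjlt) hj
            have hlt : β * d j - β * d2 < 0 := by nlinarith
            have := (hexp0 _ hlt).const_mul (x 0 j * (d j - d i0) / d j)
            simpa using this
      · exact ((hexp0 _ (by nlinarith [mul_pos hβ hd2pos])).const_mul _)
    have hval : ((∑ j, if d j = d2 then x 0 j * (d2 - d i0) / d2 else 0)
          - (β * d i0 / α) * (1 - Atot) * 0) = β * (d2 - d i0) * σ2 := by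
      rw [mul_zero, sub_zero, ← Finset.sum_filter]
      have : ∀ j ∈ Finset.univ.filter (fun j => d j = d2),
          x 0 j * (d2 - d i0) / d2 = ((d2 - d i0) / d2) * x 0 j := by
        intro j _
        ring
      rw [Finset.sum_congr rfl this, ← Finset.mul_sum, hsum2]
      field_simp
    rw [← hval]
    exact Tendsto.congr (fun y => (heq y).symm) hlim
  -- assemble the limit of Φ
  have hrp : Tendsto (fun y => (E y * Real.exp (-(β * d i0 * y))) ^ (-(d2 / d i0))) atTop
      (nhds ((α * σ1) ^ (-(d2 / d i0)))) :=
    hT2.rpow_const (Or.inl hασ1pos.ne')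
  have hprod := hT1.mul hrp
  have hev : (fun y => (Nf y * Real.exp (-(β * d2 * y)))
        * (E y * Real.exp (-(β * d i0 * y))) ^ (-(d2 / d i0))) =ᶠ[atTop] Φ := by
    filter_upwards [hT2.eventually (eventually_gt_nhds hασ1pos)] with y hy
    have hEypos : 0 < E y := by
      have h2 := mul_pos hy (Real.exp_pos (β * d i0 * y))
      rw [mul_assoc, ← Real.exp_add, neg_add_cancel, Real.exp_zero, mul_one] at h2
      exact h2
    have hrpow : (E y * Real.exp (-(β * d i0 * y))) ^ (-(d2 / d i0))
        = (E y) ^ (-(d2 / d i0)) * Real.exp (β * d2 * y) := by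
      rw [Real.mul_rpow hEypos.le (Real.exp_pos _).le, ← Real.exp_mul]
      congr 2
      field_simp
    rw [hrpow, hΦdef]
    have hcancel : Real.exp (-(β * d2 * y)) * Real.exp (β * d2 * y) = 1 := by
      rw [← Real.exp_add, neg_add_cancel, Real.exp_zero]
    calc Nf y * Real.exp (-(β * d2 * y)) * ((E y) ^ (-(d2 / d i0)) * Real.exp (β * d2 * y))
        = Nf y * (E y) ^ (-(d2 / d i0)) * (Real.exp (-(β * d2 * y)) * Real.exp (β * d2 * y)) := by
          ring
      _ = Nf y * (E y) ^ (-(d2 / d i0)) := by rw [hcancel, mul_one]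
  have hΦlim : Tendsto Φ atTop
      (nhds (β * (d2 - d i0) * σ2 * (α * σ1) ^ (-(d2 / d i0)))) :=
    Tendsto.congr' hev hprod
  have hΦu := hΦlim.comp hutop
  have heq2 : (Φ ∘ u) =ᶠ[atTop]
      fun t => ((∑ j, x t j) - β * d i0 / α) * Real.exp (α * (1 - d2 / d i0) * t) := by
    filter_upwards [eventually_ge_atTop (0:ℝ)] with t ht
    exact (htargeq t ht).symm
  have hfinal : -(β * σ2 * (d i0 - d2) * (α * σ1) ^ (-(d2 / d i0)))
      = β * (d2 - d i0) * σ2 * (α * σ1) ^ (-(d2 / d i0)) := by ring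
  rw [hfinal]
  exact Tendsto.congr' heq2 hΦu
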